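/- Let λ be an n-partition, π an n-permutation, and T a semistandard tableau of shape λ. Then S(T) ≤ Y_λ(π) (entrywise) if and only if T(l,k) ∈ B_λ(T,π;l,k) for every box (l,k) of λ. -/

import Mathlib

/-
Common combinatorial set-up for "Tableaux for Key Polynomials, Demazure
Characters, and Atoms" (Proctor–Willis).

Conventions: a box `(j, i)` means column `j`, row `i`, both 1-indexed.
Partial (remnant) tableaux are encoded by their column-length functions
`c : ℕ → ℕ` (each column of a remnant is a top segment of the original
column), together with the ambient value function `T : ℕ → ℕ → ℕ`.
-/

open scoped BigOperators Classical

noncomputable section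

namespace KeyPoly

open MvPolynomial

/-- An `n`-partition `λ = (λ_1, …, λ_n)` with `λ_1 ≥ … ≥ λ_n ≥ 0`,
recorded as a function on `1, …, n`, vanishing beyond `n`. -/
structure NPartition (n : ℕ) where
  part : ℕ → ℕ
  antitone : ∀ ⦃i j : ℕ⦄, 1 ≤ i → i ≤ j → part j ≤ part i
  outside : ∀ i : ℕ, n < i → part i = 0

variable {n : ℕ}

/-- The column length `ζ_j` of the Young diagram of `λ`. -/
def zeta (lam : NPartition n) (j : ℕ) : ℕ :=
  ((Finset.Icc 1 n).filter fun i => j ≤ lam.part i).card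

/-- The box `(j,i)` (column `j`, row `i`) belongs to the diagram of `λ`. -/
def InShape (lam : NPartition n) (j i : ℕ) : Prop :=
  1 ≤ j ∧ 1 ≤ i ∧ i ≤ n ∧ j ≤ lam.part i

/-- The boxes of the diagram of `λ`, as a finite set of pairs (column, row). -/
def boxes (lam : NPartition n) : Finset (ℕ × ℕ) :=
  (Finset.Icc 1 (lam.part 1) ×ˢ Finset.Icc 1 n).filter fun b => b.1 ≤ lam.part b.2

/-- `T` is a semistandard tableau of shape `λ` with values in `[1,n]`:
rows weakly increase eastward, columns strictly increase southward. -/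
def IsSSYT (lam : NPartition n) (T : ℕ → ℕ → ℕ) : Prop :=
  (∀ j i, InShape lam j i → 1 ≤ T j i ∧ T j i ≤ n) ∧
  (∀ j i, InShape lam (j + 1) i → T j i ≤ T (j + 1) i) ∧
  (∀ j i, InShape lam j (i + 1) → T j i < T j (i + 1))

/-- Normalization: the filling vanishes outside the shape. -/
def ZeroOutside (lam : NPartition n) (T : ℕ → ℕ → ℕ) : Prop :=
  ∀ j i, ¬ InShape lam j i → T j i = 0

/-- `T(l, k+1)`, with the boundary convention `n+1` when `k = ζ_l`. -/
def south (lam : NPartition n) (T : ℕ → ℕ → ℕ) (l k : ℕ) : ℕ :=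
  if InShape lam l (k + 1) then T l (k + 1) else n + 1

/-- `T(l+1, k)`, with the boundary convention `n` when `l = λ_k`. -/
def east (lam : NPartition n) (T : ℕ → ℕ → ℕ) (l k : ℕ) : ℕ :=
  if InShape lam (l + 1) k then T (l + 1) k else n

/-- An `n`-permutation: a tuple `(p 1, …, p n)` of distinct entries from `[1,n]`. -/
def IsNPerm (n : ℕ) (p : ℕ → ℕ) : Prop :=
  Set.BijOn p (Set.Icc 1 n) (Set.Icc 1 n)

/-- The `λ`-key `Y_λ(π)`: column `j` is `π_1, …, π_{ζ_j}` sorted increasingly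
(from top to bottom); zero outside the shape. -/
def keyTab (lam : NPartition n) (p : ℕ → ℕ) (j i : ℕ) : ℕ :=
  if InShape lam j i then
    (((Finset.Icc 1 (zeta lam j)).image p).sort (· ≤ ·)).getD (i - 1) 0
  else 0

/-- A semistandard `T` is a key if the values of each column contain the
values of every column to its east. -/
def colSet (lam : NPartition n) (T : ℕ → ℕ → ℕ) (j : ℕ) : Finset ℕ :=
  (Finset.Icc 1 (zeta lam j)).image (T j)

def IsKey (lam : NPartition n) (T : ℕ → ℕ → ℕ) : Prop :=
  ∀ j j' : ℕ, 1 ≤ j → j ≤ j' → j' ≤ lam.part 1 → colSet lam T j' ⊆ colSet lam T j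

/-! ### The (right) scanning method -/

/-- The next column of the scanning path: the earliest column `h' > h`
(up to `maxCol`) whose column bottom in the remnant `c` is nonempty and has
value weakly larger than the bottom value of column `h`. -/
def nextCol (T : ℕ → ℕ → ℕ) (c : ℕ → ℕ) (maxCol h : ℕ) : Option ℕ :=
  (List.range' (h + 1) (maxCol - h)).find?
    (fun h' => decide (0 < c h' ∧ T h (c h) ≤ T h' (c h')))

/-- Columns of the scanning path (EWIS of column bottoms) starting at column `h`,
with explicit fuel. -/
def pathColsAux (T : ℕ → ℕ → ℕ) (c : ℕ → ℕ) (maxCol : ℕ) : ℕ → ℕ → List ℕ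
  | 0, h => [h]
  | fuel + 1, h =>
    match nextCol T c maxCol h with
    | none => [h]
    | some h' => h :: pathColsAux T c maxCol fuel h'

/-- Columns of the scanning path starting at the bottom of column `j` of the
remnant with column lengths `c`. -/
def pathCols (T : ℕ → ℕ → ℕ) (c : ℕ → ℕ) (maxCol j : ℕ) : List ℕ :=
  pathColsAux T c maxCol maxCol j

/-- Remove the scanning path starting in column `j` from the remnant `c`. -/
def removePath (T : ℕ → ℕ → ℕ) (c : ℕ → ℕ) (maxCol j : ℕ) : ℕ → ℕ :=
  fun h => if h ∈ pathCols T c maxCol j then c h - 1 else c h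

/-- Iterate path removal `r` times, always starting from column `j`. -/
def remnantIter (T : ℕ → ℕ → ℕ) (c0 : ℕ → ℕ) (maxCol j : ℕ) : ℕ → ℕ → ℕ
  | 0 => c0
  | r + 1 => removePath T (remnantIter T c0 maxCol j r) maxCol j

/-- Column lengths of the remnant tableau `T^{(j;i)}`. -/
def remnant (lam : NPartition n) (T : ℕ → ℕ → ℕ) (j i : ℕ) : ℕ → ℕ :=
  remnantIter T (zeta lam) (lam.part 1) j (zeta lam j - i)

/-- The scanning path `P(T; j, i)`, recorded by its list of columns. -/
def scanPath (lam : NPartition n) (T : ℕ → ℕ → ℕ) (j i : ℕ) : List ℕ :=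
  pathCols T (remnant lam T j i) (lam.part 1) j

/-- The scanning value `S(T; j, i)`: the last value of the EWIS from `(j,i)`. -/
def scanValue (lam : NPartition n) (T : ℕ → ℕ → ℕ) (j i : ℕ) : ℕ :=
  T ((scanPath lam T j i).getLastD j)
    (remnant lam T j i ((scanPath lam T j i).getLastD j))

/-- The box `(l,k)` lies on the scanning path `P(T; j, i)`. -/
def InScanPath (lam : NPartition n) (T : ℕ → ℕ → ℕ) (j i l k : ℕ) : Prop :=
  l ∈ scanPath lam T j i ∧ k = remnant lam T j i l

/-- `m(U)` where `U` is the remnant with column lengths `c` restricted to the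
columns `l+1, …, maxCol`:  the maximum of the column-bottom values, with the
convention `m((())) = 1` for the empty tableau. -/
def mEast (T : ℕ → ℕ → ℕ) (c : ℕ → ℕ) (maxCol l : ℕ) : ℕ :=
  max 1 (((Finset.Icc (l + 1) maxCol).filter fun h => 0 < c h).sup fun h => T h (c h))

/-! ### The condition sets A, C, and B -/

/-- The set `A_λ(T, π; l, k)`. -/
def Aset (lam : NPartition n) (T : ℕ → ℕ → ℕ) (p : ℕ → ℕ) (l k : ℕ) : Set ℕ :=
  if keyTab lam p l k < mEast T (remnant lam T l k) (lam.part 1) l then (∅ : Set ℕ)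
  else Set.Icc k (min (keyTab lam p l k) (min (south lam T l k - 1) (east lam T l k)))

/-- The set `C_λ(T, π; l, k)`. -/
def Cset (lam : NPartition n) (T : ℕ → ℕ → ℕ) (p : ℕ → ℕ) (l k : ℕ) : Set ℕ :=
  if l = lam.part 1 then {keyTab lam p l k}
  else if keyTab lam p l k < mEast T (remnant lam T l k) (lam.part 1) l then (∅ : Set ℕ)
  else if mEast T (remnant lam T l k) (lam.part 1) l = keyTab lam p l k then
    Set.Icc k (min (keyTab lam p l k) (min (south lam T l k - 1) (east lam T l k)))
  else {keyTab lam p l k} ∩ Set.Icc k (min (south lam T l k - 1) (east lam T l k))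

/-- The row index `a(l,k;j)`:  the `i` with `(l-1,k) ∈ P(T;j,i)`
(convention `a(l,k;l) = k`). -/
def aIdx (lam : NPartition n) (T : ℕ → ℕ → ℕ) (l k j : ℕ) : ℕ :=
  if j = l then k
  else ((Finset.Icc 1 (zeta lam j)).filter fun i => InScanPath lam T j i (l - 1) k).sup id

/-- The row index `b(l,k;j)`:  the `i` with `(l,k+1) ∈ P(T;j,i)` when `k < ζ_l`,
and `ζ_j + 1` when `k = ζ_l` (convention `b(l,k;l) = k+1`). -/
def bIdx (lam : NPartition n) (T : ℕ → ℕ → ℕ) (l k j : ℕ) : ℕ :=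
  if j = l then k + 1
  else if k = zeta lam l then zeta lam j + 1
  else ((Finset.Icc 1 (zeta lam j)).filter fun i => InScanPath lam T j i l (k + 1)).sup id

/-- `E(l,k;j,i)`:  the value of `T` at the box `(h,m)` of `P(T;j,i)` with `h < l`
maximal (convention `E(l,k;l,k) = k`). -/
def Epath (lam : NPartition n) (T : ℕ → ℕ → ℕ) (l k j i : ℕ) : ℕ :=
  if j = l then k
  else
    T (((scanPath lam T j i).filter fun h => decide (h < l)).foldr max 0)
      (remnant lam T j i (((scanPath lam T j i).filter fun h => decide (h < l)).foldr max 0))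

/-- The set `B_λ(T, π; l, k) = ⋂_{j=1}^{l} ⋃_{i=a(j)}^{b(j)-1} [E(l,k;j,i), Y_λ(π)(j,i)]`. -/
def Bset (lam : NPartition n) (T : ℕ → ℕ → ℕ) (p : ℕ → ℕ) (l k : ℕ) : Set ℕ :=
  {v | ∀ j, 1 ≤ j → j ≤ l →
    ∃ i, aIdx lam T l k j ≤ i ∧ i + 1 ≤ bIdx lam T l k j ∧
      Epath lam T l k j i ≤ v ∧ v ≤ keyTab lam p j i}

/-! ### The left scanning method -/

/-- The largest row `r ≤ c j` of column `j` whose value is at most `x`. -/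
def maxRow (T : ℕ → ℕ → ℕ) (c : ℕ → ℕ) (j x : ℕ) : ℕ :=
  ((Finset.Icc 1 (c j)).filter fun r => T j r ≤ x).sup id

/-- The rows of the maximizing weakly decreasing sequence through columns
`j, j-1, …, 1` with initial bound `x`, in a remnant with column lengths `c`. -/
def leftRows (T : ℕ → ℕ → ℕ) (c : ℕ → ℕ) : ℕ → ℕ → List ℕ
  | 0, _ => []
  | j + 1, x => maxRow T c (j + 1) x :: leftRows T c j (T (j + 1) (maxRow T c (j + 1) x))

/-- The column-1 value at the end of the left scanning path originating at `(j, r)`. -/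
def leftEndVal (T : ℕ → ℕ → ℕ) (c : ℕ → ℕ) (j r : ℕ) : ℕ :=
  T 1 ((leftRows T c j (T j r)).getLastD 0)

/-- Remove the left scanning path originating at `(l, c l)`, together with
all values beneath it, from the remnant `c`. -/
def leftRemovePath (T : ℕ → ℕ → ℕ) (c : ℕ → ℕ) (l : ℕ) : ℕ → ℕ :=
  fun j =>
    if 1 ≤ j ∧ j ≤ l then (leftRows T c l (T l (c l))).getD (l - j) 0 - 1 else c j

/-- Iterate left-path removal `r` times (always for column `l`). -/
def leftRemnantIter (T : ℕ → ℕ → ℕ) (c0 : ℕ → ℕ) (l : ℕ) : ℕ → ℕ → ℕ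
  | 0 => c0
  | r + 1 => leftRemovePath T (leftRemnantIter T c0 l r) l

/-- Column lengths of the left remnant used to compute `M(T; l, i)`:
`T` restricted to its first `l` columns with the left scanning paths
originating at `(l, ζ_l), …, (l, i+1)` (and everything beneath them) removed. -/
def leftRemnant (lam : NPartition n) (T : ℕ → ℕ → ℕ) (l i : ℕ) : ℕ → ℕ :=
  leftRemnantIter T (zeta lam) l (zeta lam l - i)

/-- The left scanning value `M(T; l, i)`. -/
def leftScanValue (lam : NPartition n) (T : ℕ → ℕ → ℕ) (l i : ℕ) : ℕ :=
  leftEndVal T (leftRemnant lam T l i) l i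

/-! ### The condition sets F and G -/

/-- The set `F_λ(T, σ; l, k)`. -/
def Fset (lam : NPartition n) (T : ℕ → ℕ → ℕ) (sg : ℕ → ℕ) (l k : ℕ) : Set ℕ :=
  if l = 1 then Set.Icc (keyTab lam sg 1 k) (south lam T 1 k - 1)
  else
    let U := leftRemnant lam T l k
    let q := maxRow T U (l - 1) (south lam T l k - 1)
    let P := (Finset.Icc 1 q).filter fun h => keyTab lam sg l k ≤ leftEndVal T U (l - 1) h
    if hP : P.Nonempty then Set.Icc (T (l - 1) (P.min' hP)) (south lam T l k - 1)
    else (∅ : Set ℕ)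

/-- The set `G_λ(T, σ; l, k)`. -/
def Gset (lam : NPartition n) (T : ℕ → ℕ → ℕ) (sg : ℕ → ℕ) (l k : ℕ) : Set ℕ :=
  if l = 1 then {keyTab lam sg 1 k}
  else
    let U := leftRemnant lam T l k
    let q := maxRow T U (l - 1) (south lam T l k - 1)
    let P := (Finset.Icc 1 q).filter fun h => leftEndVal T U (l - 1) h = keyTab lam sg l k
    if hP : P.Nonempty then
      Set.Icc (T (l - 1) (P.min' hP))
        (min ((if P.max' hP + 1 ≤ U (l - 1) then T (l - 1) (P.max' hP + 1) else n + 1) - 1)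
          (south lam T l k - 1))
    else (∅ : Set ℕ)

/-! ### Polynomials, divided differences, words -/

/-- Polynomials in the variables `X 1, …, X n` (indexed by `ℕ`) over `ℚ`. -/
abbrev Poly : Type := MvPolynomial ℕ ℚ

/-- The action of `s_i` on polynomials: interchange `x_i` and `x_{i+1}`. -/
def sOp (i : ℕ) (P : Poly) : Poly := rename (Equiv.swap i (i + 1)) P

/-- The divided difference operator
`ρ_i = (x_i - x_{i+1})⁻¹ ∘ (1 - s_i) ∘ x_i`, defined as the unique polynomial
`Q` with `(x_i - x_{i+1}) Q = x_i P - s_i (x_i P)`. -/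
def rhoOp (i : ℕ) (P : Poly) : Poly :=
  if h : ∃ Q : Poly, (X i - X (i + 1)) * Q = X i * P - sOp i (X i * P) then h.choose
  else 0

/-- The operator `ρ̄_i := ρ_i - 1`. -/
def rhoBarOp (i : ℕ) (P : Poly) : Poly := rhoOp i P - P

/-- Apply operators indexed by a word `[i_t, …, i_1]`, rightmost first:
`applyOps f [i_t, …, i_1] P = f i_t (⋯ (f i_1 P))`. -/
def applyOps (f : ℕ → Poly → Poly) : List ℕ → Poly → Poly
  | [], P => P
  | i :: w, P => f i (applyOps f w P)

/-- The monomial `x_1^{λ_1} ⋯ x_n^{λ_n}`. -/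
def lamMonomial (lam : NPartition n) : Poly :=
  ∏ i ∈ Finset.Icc 1 n, X i ^ lam.part i

/-- The weight monomial `x^T = ∏ x_i^{c_i}` of the filling `T`. -/
def weight (lam : NPartition n) (T : ℕ → ℕ → ℕ) : Poly :=
  ∏ b ∈ boxes lam, X (T b.1 b.2)

/-- The simple reflection `s_i` acting by value. -/
def swapVal (i v : ℕ) : ℕ := if v = i then i + 1 else if v = i + 1 then i else v

/-- The permutation `s_{i_t} ⋯ s_{i_1}.(1, 2, …, n)` obtained by applying the
word `w = [i_t, …, i_1]` (rightmost letter first, each acting by value) to the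
identity. -/
def permOfWord (w : List ℕ) : ℕ → ℕ := w.foldr (fun i f => swapVal i ∘ f) id

/-- `w` is a word in letters `s_1, …, s_{n-1}` producing `π` from `(1, …, n)`. -/
def WordFor (n : ℕ) (w : List ℕ) (p : ℕ → ℕ) : Prop :=
  (∀ i ∈ w, 1 ≤ i ∧ i + 1 ≤ n) ∧ ∀ t, 1 ≤ t → t ≤ n → permOfWord w t = p t

/-- `w` is a reduced word for `π`: it produces `π` with minimal length. -/
def IsReducedWord (n : ℕ) (w : List ℕ) (p : ℕ → ℕ) : Prop :=
  WordFor n w p ∧ ∀ w' : List ℕ, WordFor n w' p → w.length ≤ w'.length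

/-- The atom `c_λ(π;x) = ρ̄_{i_t} ⋯ ρ̄_{i_1} . x_1^{λ_1} ⋯ x_n^{λ_n}`, computed
from a choice of reduced word for `π` (it is independent of this choice). -/
def atomPoly (lam : NPartition n) (p : ℕ → ℕ) : Poly :=
  if h : ∃ w : List ℕ, IsReducedWord n w p then
    applyOps rhoBarOp h.choose (lamMonomial lam)
  else 0

/-! ### `S_n^λ` -/

/-- The set `Q_λ` of distinct column lengths of `λ`. -/
def Qset (lam : NPartition n) : Finset ℕ := (Finset.Icc 1 (lam.part 1)).image (zeta lam)

/-- `π ∈ S_n^λ`: an `n`-permutation increasing on each block `[q_{r-1}+1, q_r]`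
cut out by the column lengths of `λ` (equivalently, `π_i < π_j` whenever
`i < j` and no element of `Q_λ` lies in `[i, j)`). -/
def InSnLam (lam : NPartition n) (p : ℕ → ℕ) : Prop :=
  IsNPerm n p ∧ ∀ i j, 1 ≤ i → i < j → j ≤ n →
    (∀ q ∈ Qset lam, q < i ∨ j ≤ q) → p i < p j

end KeyPoly


namespace KeyPolyAux

/-- find? on range': found element satisfies p, is in range, and is earliest. -/
theorem find?_range'_spec {p : ℕ → Bool} : ∀ (n s x : ℕ),
    (List.range' s n).find? p = some x →
    s ≤ x ∧ x < s + n ∧ p x = true ∧ ∀ y, s ≤ y → y < x → p y = false := by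
  intro n
  induction n with
  | zero => intro s x h; simp [List.range'] at h
  | succ n ih =>
    intro s x h
    rw [List.range'_succ] at h
    by_cases hs : p s = true
    · rw [List.find?_cons_of_pos hs] at h
      obtain rfl : s = x := by injection h
      exact ⟨le_rfl, by omega, hs, fun y h1 h2 => by omega⟩
    · rw [List.find?_cons_of_neg (by simp_all)] at h
      obtain ⟨h1, h2, h3, h4⟩ := ih (s+1) x h
      refine ⟨by omega, by omega, h3, fun y hy1 hy2 => ?_⟩
      rcases eq_or_lt_of_le hy1 with rfl | hy
      · simpa using hs
      · exact h4 y hy hy2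
theorem find?_range'_of_pred {p : ℕ → Bool} : ∀ (n s y : ℕ), s ≤ y → y < s + n → p y = true →
    ∃ x, (List.range' s n).find? p = some x ∧ x ≤ y := by
  intro n
  induction n with
  | zero => intro s y h1 h2; omega
  | succ n ih =>
    intro s y h1 h2 h3
    rw [List.range'_succ]
    by_cases hs : p s = true
    · exact ⟨s, List.find?_cons_of_pos hs, h1⟩
    · rw [List.find?_cons_of_neg (by simp_all)]
      rcases eq_or_lt_of_le h1 with rfl | hy
      · simp_all
      · obtain ⟨x, hx1, hx2⟩ := ih (s+1) y hy (by omega) h3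
        exact ⟨x, hx1, hx2⟩

/-- foldr max bounds members. -/
theorem le_foldr_max {x : ℕ} : ∀ {L : List ℕ}, x ∈ L → x ≤ L.foldr max 0 := by
  intro L
  induction L with
  | nil => simp
  | cons a L ih =>
    intro hx
    rcases List.mem_cons.mp hx with rfl | hx
    · simp [List.foldr_cons]
    · exact le_trans (ih hx) (by simp [List.foldr_cons])

theorem foldr_max_mem : ∀ (L : List ℕ), L.foldr max 0 ∈ L ∨ L.foldr max 0 = 0 := by
  intro L
  induction L with
  | nil => simp
  | cons a L ih =>
    rcases ih with h | h
    · rcases Nat.le_total (L.foldr max 0) a with hle | hle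
      · left
        have : (a :: L).foldr max 0 = a := by simp [List.foldr_cons, max_eq_left hle]
        rw [this]; exact List.mem_cons_self
      · left
        have : (a :: L).foldr max 0 = L.foldr max 0 := by
          simp [List.foldr_cons, max_eq_right hle]
        rw [this]; exact List.mem_cons_of_mem _ h
    · rw [List.foldr_cons, h]
      rcases Nat.eq_zero_or_pos a with rfl | ha
      · right; simp
      · left
        have : max a 0 = a := by omega
        rw [this]; exact List.mem_cons_self

/-- In a list pairwise-related by `<` with values `v` pairwise `≤`,
membership with numeric order gives value order. -/
theorem pairwise_val_le {v : ℕ → ℕ} : ∀ {L : List ℕ}, L.Pairwise (· < ·) →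
    L.Pairwise (fun a b => v a ≤ v b) → ∀ {x y}, x ∈ L → y ∈ L → x ≤ y → v x ≤ v y := by
  intro L
  induction L with
  | nil => simp
  | cons a L ih =>
    intro h1 h2 x y hx hy hxy
    rcases List.pairwise_cons.mp h1 with ⟨h1a, h1b⟩
    rcases List.pairwise_cons.mp h2 with ⟨h2a, h2b⟩
    rcases List.mem_cons.mp hx with hx' | hx'
    · subst hx'
      rcases List.mem_cons.mp hy with hy' | hy'
      · subst hy'; exact le_rfl
      · exact h2a y hy'
    · rcases List.mem_cons.mp hy with hy' | hy'
      · subst hy'; exact absurd (h1a x hx') (by omega)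
      · exact ih h1b h2b hx' hy' hxy
    
end KeyPolyAux

namespace KeyPoly

open KeyPolyAux

variable {n : ℕ}

section ShapeLemmas

lemma zeta_antitone (lam : NPartition n) {j j' : ℕ} (h : j ≤ j') :
    zeta lam j' ≤ zeta lam j := by
  apply Finset.card_le_card
  intro i hi
  rw [Finset.mem_filter] at hi ⊢
  exact ⟨hi.1, le_trans h hi.2⟩

lemma zeta_le_n (lam : NPartition n) (j : ℕ) : zeta lam j ≤ n := by
  calc zeta lam j ≤ (Finset.Icc 1 n).card := Finset.card_filter_le _ _
  _ = n := by rw [Nat.card_Icc]; omega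

lemma inShape_iff (lam : NPartition n) {l k : ℕ} (hl : 1 ≤ l) (hk : 1 ≤ k) :
    InShape lam l k ↔ k ≤ zeta lam l := by
  constructor
  · rintro ⟨-, -, hkn, hlp⟩
    have hsub : Finset.Icc 1 k ⊆ (Finset.Icc 1 n).filter fun i => l ≤ lam.part i := by
      intro i hi
      rw [Finset.mem_Icc] at hi
      rw [Finset.mem_filter, Finset.mem_Icc]
      exact ⟨⟨hi.1, le_trans hi.2 hkn⟩, le_trans hlp (lam.antitone hi.1 hi.2)⟩
    have := Finset.card_le_card hsub
    rwa [Nat.card_Icc, Nat.add_sub_cancel] at this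
  · intro h
    have hkn : k ≤ n := le_trans h (zeta_le_n lam l)
    refine ⟨hl, hk, hkn, ?_⟩
    by_contra hlp
    push_neg at hlp
    have hsub : (Finset.Icc 1 n).filter (fun i => l ≤ lam.part i) ⊆ Finset.Icc 1 (k-1) := by
      intro i hi
      rw [Finset.mem_filter, Finset.mem_Icc] at hi
      rw [Finset.mem_Icc]
      refine ⟨hi.1.1, ?_⟩
      by_contra hik
      push_neg at hik
      have : lam.part i ≤ lam.part k := lam.antitone hk (by omega)
      omega
    have := Finset.card_le_card hsub
    rw [Nat.card_Icc] at this
    unfold zeta at h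
    omega

lemma inShape_le_part_one (lam : NPartition n) {l k : ℕ} (h : InShape lam l k) :
    l ≤ lam.part 1 := le_trans h.2.2.2 (lam.antitone le_rfl h.2.1)

lemma zeta_eq_zero_of_gt (lam : NPartition n) {h : ℕ} (hh : lam.part 1 < h) :
    zeta lam h = 0 := by
  rw [zeta, Finset.card_eq_zero, Finset.filter_eq_empty_iff]
  intro i hi
  rw [Finset.mem_Icc] at hi
  have : lam.part i ≤ lam.part 1 := lam.antitone le_rfl hi.1
  omega

lemma inShape_mono_row (lam : NPartition n) {l k k' : ℕ} (h : InShape lam l k)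
    (h1 : 1 ≤ k') (h2 : k' ≤ k) : InShape lam l k' :=
  ⟨h.1, h1, le_trans h2 h.2.2.1, le_trans h.2.2.2 (lam.antitone h1 h2)⟩

lemma inShape_mono_col (lam : NPartition n) {l k l' : ℕ} (h : InShape lam l k)
    (h1 : 1 ≤ l') (h2 : l' ≤ l) : InShape lam l' k :=
  ⟨h1, h.2.1, h.2.2.1, le_trans h2 h.2.2.2⟩

variable {lam : NPartition n} {T : ℕ → ℕ → ℕ}

lemma T_row_le (hT : IsSSYT lam T) {g f m : ℕ} (hg : 1 ≤ g) (hgf : g ≤ f)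
    (hf : InShape lam f m) : T g m ≤ T f m := by
  induction f with
  | zero => omega
  | succ f ih =>
    rcases eq_or_lt_of_le hgf with rfl | hlt
    · exact le_rfl
    · have hf' : InShape lam f m := inShape_mono_col lam hf (by omega) (by omega)
      exact le_trans (ih (by omega) hf') (hT.2.1 f m hf)

lemma T_col_le (hT : IsSSYT lam T) {f m m' : ℕ} (hm : 1 ≤ m) (hmm : m ≤ m')
    (hf : InShape lam f m') : T f m ≤ T f m' := by
  induction m' with
  | zero => omega
  | succ m' ih =>
    rcases eq_or_lt_of_le hmm with rfl | hlt
    · exact le_rfl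
    · have hf' : InShape lam f m' := inShape_mono_row lam hf (by omega) (by omega)
      exact le_trans (ih (by omega) hf') (le_of_lt (hT.2.2 f m' hf))

lemma row_le_T (hT : IsSSYT lam T) {l k : ℕ} (h : InShape lam l k) : k ≤ T l k := by
  induction k with
  | zero => omega
  | succ k ih =>
    rcases Nat.eq_zero_or_pos k with rfl | hk
    · exact (hT.1 l 1 h).1
    · have h' : InShape lam l k := inShape_mono_row lam h (by omega) (by omega)
      exact lt_of_le_of_lt (ih h') (hT.2.2 l k h)

lemma keyTab_sort_length {p : ℕ → ℕ} (hp : IsNPerm n p) (lam : NPartition n) (j : ℕ) :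
    (((Finset.Icc 1 (zeta lam j)).image p).sort (· ≤ ·)).length = zeta lam j := by
  rw [Finset.length_sort, Finset.card_image_of_injOn, Nat.card_Icc]
  · omega
  · intro a ha b hb hab
    rw [Finset.mem_coe, Finset.mem_Icc] at ha hb
    have hz := zeta_le_n lam j
    exact hp.injOn (Set.mem_Icc.mpr ⟨ha.1, le_trans ha.2 hz⟩)
      (Set.mem_Icc.mpr ⟨hb.1, le_trans hb.2 hz⟩) hab

lemma keyTab_mono {p : ℕ → ℕ} (hp : IsNPerm n p) {j i i' : ℕ} (hj : 1 ≤ j)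
    (h1 : 1 ≤ i') (h2 : i' ≤ i) (h3 : i ≤ zeta lam j) :
    keyTab lam p j i' ≤ keyTab lam p j i := by
  rcases eq_or_lt_of_le h2 with rfl | hlt
  · exact le_rfl
  have hS' : InShape lam j i' := (inShape_iff lam hj h1).mpr (by omega)
  have hS : InShape lam j i := (inShape_iff lam hj (by omega)).mpr h3
  rw [keyTab, keyTab, if_pos hS', if_pos hS]
  set L := ((Finset.Icc 1 (zeta lam j)).image p).sort (· ≤ ·) with hL
  have hlen : L.length = zeta lam j := keyTab_sort_length hp lam j
  have hi' : i' - 1 < L.length := by omega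
  have hi : i - 1 < L.length := by omega
  rw [L.getD_eq_getElem 0 hi', L.getD_eq_getElem 0 hi]
  have hsorted : L.Pairwise (· ≤ ·) := Finset.pairwise_sort _ _
  exact (List.pairwise_iff_getElem.mp hsorted) (i'-1) (i-1) hi' hi (by omega)

end ShapeLemmas

end KeyPoly

namespace KeyPoly

open KeyPolyAux

section PathLemmas

variable (T : ℕ → ℕ → ℕ) (c : ℕ → ℕ) (M : ℕ)

lemma nextCol_some_spec {h h' : ℕ} (hnc : nextCol T c M h = some h') :
    h < h' ∧ h' ≤ M ∧ 0 < c h' ∧ T h (c h) ≤ T h' (c h') ∧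
      ∀ f, h < f → f < h' → ¬(0 < c f ∧ T h (c h) ≤ T f (c f)) := by
  obtain ⟨h1, h2, h3, h4⟩ := find?_range'_spec _ _ _ hnc
  rw [decide_eq_true_iff] at h3
  refine ⟨by omega, by omega, h3.1, h3.2, fun f hf1 hf2 hf3 => ?_⟩
  have := h4 f (by omega) hf2
  rw [decide_eq_false_iff_not] at this
  exact this hf3

lemma nextCol_none_spec {h : ℕ} (hnc : nextCol T c M h = none) :
    ∀ f, h < f → f ≤ M → ¬(0 < c f ∧ T h (c h) ≤ T f (c f)) := by
  intro f hf1 hf2 hf3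
  obtain ⟨x, hx, -⟩ := find?_range'_of_pred
    (p := fun h' => decide (0 < c h' ∧ T h (c h) ≤ T h' (c h'))) (M - h) (h+1) f
    (by omega) (by omega) (by rw [decide_eq_true_iff]; exact hf3)
  rw [nextCol] at hnc
  rw [hnc] at hx
  cases hx

lemma nextCol_some_of {h f : ℕ} (hf1 : h < f) (hf2 : f ≤ M) (hf3 : 0 < c f)
    (hf4 : T h (c h) ≤ T f (c f)) : ∃ h', nextCol T c M h = some h' ∧ h' ≤ f := by
  obtain ⟨x, hx, hxle⟩ := find?_range'_of_pred
    (p := fun h' => decide (0 < c h' ∧ T h (c h) ≤ T h' (c h'))) (M - h) (h+1) f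
    (by omega) (by omega) (by rw [decide_eq_true_iff]; exact ⟨hf3, hf4⟩)
  exact ⟨x, hx, hxle⟩

lemma pathColsAux_cons : ∀ (fuel h : ℕ), ∃ t, pathColsAux T c M fuel h = h :: t := by
  intro fuel h
  cases fuel with
  | zero => exact ⟨[], rfl⟩
  | succ fuel =>
    cases hnc : nextCol T c M h with
    | none => exact ⟨[], by rw [pathColsAux, hnc]⟩
    | some h' => exact ⟨_, by rw [pathColsAux, hnc]⟩

lemma pathColsAux_chain : ∀ (fuel h : ℕ),
    List.Chain' (fun a b => nextCol T c M a = some b) (pathColsAux T c M fuel h) := by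
  intro fuel
  induction fuel with
  | zero => intro h; simp [pathColsAux]; exact List.isChain_singleton _
  | succ fuel ih =>
    intro h
    cases hnc : nextCol T c M h with
    | none => rw [pathColsAux, hnc]; exact List.isChain_singleton _
    | some h' =>
      simp only [pathColsAux, hnc]
      obtain ⟨t, ht⟩ := pathColsAux_cons T c M fuel h'
      rw [ht]
      exact List.isChain_cons_cons.mpr ⟨hnc, by rw [← ht]; exact ih h'⟩

lemma pathColsAux_mem : ∀ (fuel h x : ℕ), x ∈ pathColsAux T c M fuel h →
    x = h ∨ (h < x ∧ x ≤ M ∧ 0 < c x) := by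
  intro fuel
  induction fuel with
  | zero =>
    intro h x hx
    simp [pathColsAux] at hx
    exact Or.inl hx
  | succ fuel ih =>
    intro h x hx
    cases hnc : nextCol T c M h with
    | none => rw [pathColsAux, hnc] at hx; simp at hx; exact Or.inl hx
    | some h' =>
      rw [pathColsAux, hnc] at hx
      rcases List.mem_cons.mp hx with rfl | hx'
      · exact Or.inl rfl
      · obtain ⟨hlt, hle, hc, -, -⟩ := nextCol_some_spec T c M hnc
        rcases ih h' x hx' with rfl | ⟨h1, h2, h3⟩
        · exact Or.inr ⟨hlt, hle, hc⟩
        · exact Or.inr ⟨by omega, h2, h3⟩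

lemma pathColsAux_complete : ∀ (fuel h : ℕ), M - h ≤ fuel →
    ∀ x ∈ pathColsAux T c M fuel h, nextCol T c M x = none ∨
      ∃ y ∈ pathColsAux T c M fuel h, nextCol T c M x = some y := by
  intro fuel
  induction fuel with
  | zero =>
    intro h hfuel x hx
    simp [pathColsAux] at hx
    subst hx
    left
    rw [nextCol]
    have : M - x = 0 := by omega
    rw [this]
    simp [List.range']
  | succ fuel ih =>
    intro h hfuel x hx
    cases hnc : nextCol T c M h with
    | none =>
      rw [pathColsAux, hnc] at hx; simp at hx; subst hx; exact Or.inl hnc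
    | some h' =>
      simp only [pathColsAux, hnc] at hx ⊢
      obtain ⟨hlt, hle, -, -, -⟩ := nextCol_some_spec T c M hnc
      rcases List.mem_cons.mp hx with rfl | hx'
      · right
        obtain ⟨t, ht⟩ := pathColsAux_cons T c M fuel h'
        refine ⟨h', List.mem_cons_of_mem _ ?_, hnc⟩
        rw [ht]
        exact List.mem_cons_self
      · rcases ih h' (by omega) x hx' with hnone | ⟨y, hy1, hy2⟩
        · exact Or.inl hnone
        · exact Or.inr ⟨y, List.mem_cons_of_mem _ hy1, hy2⟩

lemma pathColsAux_pairwise : ∀ (fuel h : ℕ),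
    (pathColsAux T c M fuel h).Pairwise
      (fun a b => a < b ∧ T a (c a) ≤ T b (c b)) := by
  intro fuel h
  have hchain := pathColsAux_chain T c M fuel h
  have hchain2 : List.Chain' (fun a b => a < b ∧ T a (c a) ≤ T b (c b))
      (pathColsAux T c M fuel h) := by
    refine List.IsChain.imp ?_ hchain
    intro a b hab
    obtain ⟨h1, -, -, h4, -⟩ := nextCol_some_spec T c M hab
    exact ⟨h1, h4⟩
  haveI : IsTrans ℕ (fun a b => a < b ∧ T a (c a) ≤ T b (c b)) :=
    ⟨fun a b d hab hbd => ⟨lt_trans hab.1 hbd.1, le_trans hab.2 hbd.2⟩⟩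
  exact List.isChain_iff_pairwise.mp hchain2

/-- Continuation: if `x` is on the path and some column `f` east of `x`
qualifies, then the path continues past `x` to some column `≤ f`. -/
lemma pathCols_continue {j x f : ℕ} (hx : x ∈ pathCols T c M j)
    (hf1 : x < f) (hf2 : f ≤ M) (hf3 : 0 < c f) (hf4 : T x (c x) ≤ T f (c f)) :
    ∃ y ∈ pathCols T c M j, x < y ∧ y ≤ f := by
  rcases pathColsAux_complete T c M M j (by omega) x hx with hnone | ⟨y, hy1, hy2⟩
  · exact absurd ⟨hf3, hf4⟩ (nextCol_none_spec T c M hnone f hf1 hf2)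
  · obtain ⟨hlt, -, -, -, hmin⟩ := nextCol_some_spec T c M hy2
    refine ⟨y, hy1, hlt, ?_⟩
    by_contra hyf
    push_neg at hyf
    exact hmin f hf1 hyf ⟨hf3, hf4⟩

lemma pathCols_mem_self (j : ℕ) : j ∈ pathCols T c M j := by
  obtain ⟨t, ht⟩ := pathColsAux_cons T c M M j
  rw [pathCols, ht]
  exact List.mem_cons_self

lemma pathCols_ne_nil (j : ℕ) : pathCols T c M j ≠ [] := by
  obtain ⟨t, ht⟩ := pathColsAux_cons T c M M j
  rw [pathCols, ht]
  exact List.cons_ne_nil _ _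

lemma pathCols_mem (j x : ℕ) (hx : x ∈ pathCols T c M j) :
    x = j ∨ (j < x ∧ x ≤ M ∧ 0 < c x) := pathColsAux_mem T c M M j x hx

lemma pathCols_val_mono {j x y : ℕ} (hx : x ∈ pathCols T c M j)
    (hy : y ∈ pathCols T c M j) (hxy : x ≤ y) : T x (c x) ≤ T y (c y) := by
  have hpw := pathColsAux_pairwise T c M M j
  exact pairwise_val_le (hpw.imp fun h => h.1) (hpw.imp fun h => h.2) hx hy hxy

end PathLemmas

end KeyPoly

namespace KeyPoly

open KeyPolyAux

section Invariant

variable {n : ℕ} {lam : NPartition n} {T : ℕ → ℕ → ℕ} {j : ℕ}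

/-- Invariant of remnant column-length functions during scanning from column `j`:
bounded by the shape, and weakly decreasing on columns `≥ j`. -/
def GoodSt (lam : NPartition n) (j : ℕ) (c : ℕ → ℕ) : Prop :=
  (∀ h, c h ≤ zeta lam h) ∧ ∀ x y, j ≤ x → x ≤ y → c y ≤ c x

lemma goodSt_zeta : GoodSt lam j (zeta lam) :=
  ⟨fun _ => le_rfl, fun _ _ _ hxy => zeta_antitone lam hxy⟩

lemma goodSt_removePath (hT : IsSSYT lam T) (hj : 1 ≤ j) {c : ℕ → ℕ}
    (hG : GoodSt lam j c) : GoodSt lam j (removePath T c (lam.part 1) j) := by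
  obtain ⟨hbd, hmono⟩ := hG
  constructor
  · intro h
    rw [removePath]
    split
    · exact le_trans (Nat.sub_le _ _) (hbd h)
    · exact hbd h
  · intro x y hjx hxy
    rw [removePath, removePath]
    set M := lam.part 1 with hM
    by_cases hx : x ∈ pathCols T c M j
    · rw [if_pos hx]
      by_cases hy : y ∈ pathCols T c M j
      · rw [if_pos hy]
        have := hmono x y hjx hxy
        omega
      · rw [if_neg hy]
        rcases Nat.eq_zero_or_pos (c y) with hcy0 | hcy
        · omega
        have hle := hmono x y hjx hxy
        rcases lt_or_eq_of_le hle with hlt | heq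
        · omega
        · exfalso
          -- c y = c x =: m ≥ 1 ; walk the path from x to y
          have claim : ∀ d, x + d ≤ y → x + d ∈ pathCols T c M j := by
            intro d
            induction d with
            | zero => intro _; simpa using hx
            | succ d ih =>
              intro hdy
              have hz : x + d ∈ pathCols T c M j := ih (by omega)
              have hcz : c (x + d) = c y := by
                have h1 := hmono x (x + d) hjx (by omega)
                have h2 := hmono (x + d) y (by omega) (by omega)
                omega
              have hcz1 : c (x + d + 1) = c y := by
                have h1 := hmono x (x + d + 1) hjx (by omega)
                have h2 := hmono (x + d + 1) y (by omega) hdy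
                omega
              have hshape : InShape lam (x + d + 1) (c y) :=
                (inShape_iff lam (by omega) (by omega)).mpr (by rw [← hcz1]; exact hbd _)
              have hMle : x + d + 1 ≤ M := hM ▸ inShape_le_part_one lam hshape
              have hrow : T (x + d) (c (x + d)) ≤ T (x + d + 1) (c (x + d + 1)) := by
                rw [hcz, hcz1]
                exact T_row_le hT (by omega) (by omega) hshape
              obtain ⟨y', hy'P, hy'1, hy'2⟩ := pathCols_continue T c M hz
                (by omega) hMle (by omega) hrow
              have h3 : x + (d + 1) = y' := by omega
              rw [← h3] at hy'P
              exact hy'P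
          have := claim (y - x) (by omega)
          rw [Nat.add_sub_cancel' hxy] at this
          exact hy this
    · rw [if_neg hx]
      by_cases hy : y ∈ pathCols T c M j
      · rw [if_pos hy]
        exact le_trans (Nat.sub_le _ _) (hmono x y hjx hxy)
      · rw [if_neg hy]
        exact hmono x y hjx hxy

lemma remnantIter_good (hT : IsSSYT lam T) (hj : 1 ≤ j) (r : ℕ) :
    GoodSt lam j (remnantIter T (zeta lam) (lam.part 1) j r) := by
  induction r with
  | zero => exact goodSt_zeta
  | succ r ih => exact goodSt_removePath hT hj ih

lemma remnantIter_step_mem {r l : ℕ}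
    (hmem : l ∈ pathCols T (remnantIter T (zeta lam) (lam.part 1) j r) (lam.part 1) j) :
    remnantIter T (zeta lam) (lam.part 1) j (r+1) l =
      remnantIter T (zeta lam) (lam.part 1) j r l - 1 := by
  show removePath T _ _ j l = _
  rw [removePath, if_pos hmem]

lemma remnantIter_step_not {r l : ℕ}
    (hmem : l ∉ pathCols T (remnantIter T (zeta lam) (lam.part 1) j r) (lam.part 1) j) :
    remnantIter T (zeta lam) (lam.part 1) j (r+1) l =
      remnantIter T (zeta lam) (lam.part 1) j r l := by
  show removePath T _ _ j l = _
  rw [removePath, if_neg hmem]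

lemma remnantIter_step_le (r l : ℕ) :
    remnantIter T (zeta lam) (lam.part 1) j (r+1) l ≤
      remnantIter T (zeta lam) (lam.part 1) j r l := by
  by_cases hmem : l ∈ pathCols T (remnantIter T (zeta lam) (lam.part 1) j r) (lam.part 1) j
  · rw [remnantIter_step_mem hmem]; omega
  · rw [remnantIter_step_not hmem]

lemma remnantIter_anti {r r' : ℕ} (h : r ≤ r') (l : ℕ) :
    remnantIter T (zeta lam) (lam.part 1) j r' l ≤
      remnantIter T (zeta lam) (lam.part 1) j r l := by
  induction r' with
  | zero =>
    have : r = 0 := by omega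
    rw [this]
  | succ r' ih =>
    rcases Nat.lt_or_ge r (r'+1) with hlt | hge
    · exact le_trans (remnantIter_step_le r' l) (ih (by omega))
    · have : r = r' + 1 := by omega
      rw [this]

lemma remnantIter_self (r : ℕ) :
    remnantIter T (zeta lam) (lam.part 1) j r j = zeta lam j - r := by
  induction r with
  | zero => rfl
  | succ r ih =>
    rw [remnantIter_step_mem (pathCols_mem_self T _ _ j), ih]
    omega

lemma exists_removal (hT : IsSSYT lam T) (hj : 1 ≤ j) {l k : ℕ} (hjl : j ≤ l)
    (hk1 : 1 ≤ k) (hkz : k ≤ zeta lam l) :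
    ∃ r, r < zeta lam j ∧ remnantIter T (zeta lam) (lam.part 1) j r l = k ∧
      l ∈ pathCols T (remnantIter T (zeta lam) (lam.part 1) j r) (lam.part 1) j := by
  set Z := zeta lam j with hZ
  have hend : remnantIter T (zeta lam) (lam.part 1) j Z l = 0 := by
    have h1 := (remnantIter_good hT hj Z).2 j l le_rfl hjl
    rw [remnantIter_self] at h1
    omega
  set S := (Finset.range (Z+1)).filter
    (fun r => k ≤ remnantIter T (zeta lam) (lam.part 1) j r l) with hS
  have h0S : 0 ∈ S := by
    rw [hS, Finset.mem_filter, Finset.mem_range]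
    exact ⟨by omega, by show k ≤ zeta lam l; exact hkz⟩
  have hne : S.Nonempty := ⟨0, h0S⟩
  set r := S.max' hne with hr
  have hrS : r ∈ S := S.max'_mem hne
  rw [hS, Finset.mem_filter, Finset.mem_range] at hrS
  have hrZ : r ≠ Z := by
    intro hrz
    rw [hrz, hend] at hrS
    omega
  have hnot : r + 1 ∉ S := by
    intro hmem
    have := S.le_max' _ hmem
    omega
  rw [hS, Finset.mem_filter, Finset.mem_range] at hnot
  push_neg at hnot
  have hlt : remnantIter T (zeta lam) (lam.part 1) j (r+1) l < k := hnot (by omega)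
  by_cases hmem : l ∈ pathCols T (remnantIter T (zeta lam) (lam.part 1) j r) (lam.part 1) j
  · have hstep := remnantIter_step_mem (j := j) hmem
    refine ⟨r, by omega, by omega, hmem⟩
  · rw [remnantIter_step_not hmem] at hlt
    omega

lemma removal_unique {l k r r' : ℕ} (hk : 1 ≤ k)
    (h1 : remnantIter T (zeta lam) (lam.part 1) j r l = k)
    (h1' : l ∈ pathCols T (remnantIter T (zeta lam) (lam.part 1) j r) (lam.part 1) j)
    (h2 : remnantIter T (zeta lam) (lam.part 1) j r' l = k)
    (h2' : l ∈ pathCols T (remnantIter T (zeta lam) (lam.part 1) j r') (lam.part 1) j) :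
    r = r' := by
  have key : ∀ s s' : ℕ, s < s' →
      remnantIter T (zeta lam) (lam.part 1) j s l = k →
      l ∈ pathCols T (remnantIter T (zeta lam) (lam.part 1) j s) (lam.part 1) j →
      remnantIter T (zeta lam) (lam.part 1) j s' l ≠ k := by
    intro s s' hss hs hsP
    have hstep := remnantIter_step_mem (j := j) hsP
    have hanti := remnantIter_anti (lam := lam) (T := T) (j := j)
      (r := s + 1) (r' := s') (by omega) l
    omega
  rcases lt_trichotomy r r' with hlt | heq | hgt
  · exact absurd h2 (key r r' hlt h1 h1')
  · exact heq
  · exact absurd h1 (key r' r hgt h2 h2')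

end Invariant

end KeyPoly

namespace KeyPolyAux

theorem getLastD_eq_getLast {α : Type*} : ∀ (L : List α) (h : L ≠ []) (d : α),
    L.getLastD d = L.getLast h := by
  intro L
  induction L with
  | nil => intro h; exact absurd rfl h
  | cons a t ih =>
    intro h d
    cases t with
    | nil => rfl
    | cons b t' =>
      rw [List.getLastD_cons, List.getLast_cons (by simp)]
      exact ih (by simp) a

theorem pairwise_getLast {R : ℕ → ℕ → Prop} : ∀ (L : List ℕ) (h : L ≠ [])
    (_ : L.Pairwise R) {x : ℕ}, x ∈ L → x = L.getLast h ∨ R x (L.getLast h) := by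
  intro L
  induction L with
  | nil => intro h; exact absurd rfl h
  | cons a t ih =>
    intro h hp x hx
    rcases List.pairwise_cons.mp hp with ⟨hpa, hpt⟩
    cases t with
    | nil =>
      rcases List.mem_cons.mp hx with rfl | hx'
      · left; rfl
      · exact absurd hx' (List.not_mem_nil)
    | cons b t' =>
      rw [List.getLast_cons (by simp)]
      rcases List.mem_cons.mp hx with rfl | hx'
      · right; exact hpa _ (List.getLast_mem _)
      · exact ih (by simp) hpt hx'

end KeyPolyAux

namespace KeyPoly

open KeyPolyAux

section ScanIndex

variable {n : ℕ} {lam : NPartition n} {T : ℕ → ℕ → ℕ} {j : ℕ}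

lemma remnant_def (i : ℕ) :
    remnant lam T j i = remnantIter T (zeta lam) (lam.part 1) j (zeta lam j - i) := rfl

lemma scanPath_def (i : ℕ) :
    scanPath lam T j i = pathCols T (remnant lam T j i) (lam.part 1) j := rfl

lemma remnant_self (hT : IsSSYT lam T) {i : ℕ} (hi : i ≤ zeta lam j) :
    remnant lam T j i j = i := by
  rw [remnant_def, remnantIter_self]
  omega

lemma remnant_le_zeta (hT : IsSSYT lam T) (hj : 1 ≤ j) (i l : ℕ) :
    remnant lam T j i l ≤ zeta lam l :=
  (remnantIter_good hT hj _).1 l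

lemma scan_index_exists (hT : IsSSYT lam T) (hj : 1 ≤ j) {l k : ℕ} (hjl : j ≤ l)
    (hk1 : 1 ≤ k) (hkz : k ≤ zeta lam l) :
    ∃ i, 1 ≤ i ∧ i ≤ zeta lam j ∧ InScanPath lam T j i l k := by
  obtain ⟨r, hr1, hr2, hr3⟩ := exists_removal hT hj hjl hk1 hkz
  refine ⟨zeta lam j - r, by omega, by omega, ?_, ?_⟩
  · rw [scanPath_def, remnant_def]
    have : zeta lam j - (zeta lam j - r) = r := by omega
    rw [this]
    exact hr3
  · rw [remnant_def]
    have : zeta lam j - (zeta lam j - r) = r := by omega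
    rw [this, hr2]

lemma scan_index_unique {l k i i' : ℕ} (hk1 : 1 ≤ k)
    (h : InScanPath lam T j i l k) (h' : InScanPath lam T j i' l k)
    (hi1 : 1 ≤ i) (hiz : i ≤ zeta lam j) (hi1' : 1 ≤ i') (hiz' : i' ≤ zeta lam j) :
    i = i' := by
  obtain ⟨hm, he⟩ := h
  obtain ⟨hm', he'⟩ := h'
  rw [scanPath_def, remnant_def] at hm hm'
  rw [remnant_def] at he he'
  have := removal_unique hk1 he.symm hm he'.symm hm'
  omega

/-- If `(l-1,k)` lies on path `a` and `(l,k)` on path `i₀` then `a ≤ i₀`. -/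
lemma window_lower (hT : IsSSYT lam T) (hj : 1 ≤ j) {l k a i₀ : ℕ} (hjl : j < l)
    (hk1 : 1 ≤ k) (ha : InScanPath lam T j a (l-1) k) (ha1 : 1 ≤ a) (haz : a ≤ zeta lam j)
    (hi₀ : InScanPath lam T j i₀ l k) (hi₀1 : 1 ≤ i₀) (hi₀z : i₀ ≤ zeta lam j) :
    a ≤ i₀ := by
  by_contra hcon
  push_neg at hcon
  obtain ⟨ham, hae⟩ := ha
  obtain ⟨him, hie⟩ := hi₀
  rw [scanPath_def, remnant_def] at ham him
  rw [remnant_def] at hae hie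
  set ra := zeta lam j - a with hra
  set r₀ := zeta lam j - i₀ with hr₀
  have hstep := remnantIter_step_mem (j := j) ham
  have hanti := remnantIter_anti (lam := lam) (T := T) (j := j)
    (r := ra + 1) (r' := r₀) (by omega) (l-1)
  have hmono := (remnantIter_good hT hj r₀).2 (l-1) l (by omega) (by omega)
  omega

lemma window_upper (hT : IsSSYT lam T) (hj : 1 ≤ j) {l k i₀ : ℕ} (hjl : j < l)
    (hshape : InShape lam l k)
    (hi₀ : InScanPath lam T j i₀ l k) (hi₀1 : 1 ≤ i₀) (hi₀z : i₀ ≤ zeta lam j) :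
    i₀ < bIdx lam T l k j := by
  have hjne : j ≠ l := by omega
  by_cases hk : k = zeta lam l
  · rw [bIdx, if_neg hjne, if_pos hk]
    omega
  · rw [bIdx, if_neg hjne, if_neg hk]
    have hk1 : 1 ≤ k := hshape.2.1
    have hkz : k ≤ zeta lam l := (inShape_iff lam hshape.1 hk1).mp hshape
    have hkz' : k + 1 ≤ zeta lam l := by omega
    obtain ⟨b, hb1, hbz, hb⟩ := scan_index_exists hT hj (by omega : j ≤ l) (by omega) hkz'
    have hfilter : (Finset.Icc 1 (zeta lam j)).filter
        (fun i => InScanPath lam T j i l (k+1)) = {b} := by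
      apply Finset.ext
      intro i
      rw [Finset.mem_filter, Finset.mem_Icc, Finset.mem_singleton]
      constructor
      · rintro ⟨⟨hi1, hiz⟩, hisp⟩
        exact scan_index_unique (by omega) hisp hb hi1 hiz hb1 hbz
      · rintro rfl
        exact ⟨⟨hb1, hbz⟩, hb⟩
    rw [hfilter, Finset.sup_singleton, id]
    -- show i₀ < b
    obtain ⟨him, hie⟩ := hi₀
    obtain ⟨hbm, hbe⟩ := hb
    rw [scanPath_def, remnant_def] at him hbm
    rw [remnant_def] at hie hbe
    by_contra hcon
    push_neg at hcon
    have hanti := remnantIter_anti (lam := lam) (T := T) (j := j)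
      (r := zeta lam j - i₀) (r' := zeta lam j - b) (by omega) l
    omega

lemma window_state (hT : IsSSYT lam T) (hj : 1 ≤ j) {l k i₀ i : ℕ} (hjl : j < l)
    (hshape : InShape lam l k)
    (hi₀ : InScanPath lam T j i₀ l k) (hi₀1 : 1 ≤ i₀) (hi₀z : i₀ ≤ zeta lam j)
    (hi : i₀ ≤ i) (hib : i < bIdx lam T l k j) (hiz : i ≤ zeta lam j) :
    remnant lam T j i l = k := by
  have hjne : j ≠ l := by omega
  obtain ⟨him, hie⟩ := hi₀
  rw [scanPath_def, remnant_def] at him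
  rw [remnant_def] at hie
  have hlow := remnantIter_anti (lam := lam) (T := T) (j := j)
    (r := zeta lam j - i) (r' := zeta lam j - i₀) (by omega) l
  rw [remnant_def]
  by_cases hk : k = zeta lam l
  · have hup := remnantIter_anti (lam := lam) (T := T) (j := j)
      (r := 0) (r' := zeta lam j - i) (by omega) l
    have h0 : remnantIter T (zeta lam) (lam.part 1) j 0 l = zeta lam l := rfl
    omega
  · have hk1 : 1 ≤ k := hshape.2.1
    have hkz : k ≤ zeta lam l := (inShape_iff lam hshape.1 hk1).mp hshape
    have hkz' : k + 1 ≤ zeta lam l := by omega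
    obtain ⟨b, hb1, hbz, hb⟩ := scan_index_exists hT hj (by omega : j ≤ l) (by omega) hkz'
    have hfilter : (Finset.Icc 1 (zeta lam j)).filter
        (fun i => InScanPath lam T j i l (k+1)) = {b} := by
      apply Finset.ext
      intro i'
      rw [Finset.mem_filter, Finset.mem_Icc, Finset.mem_singleton]
      constructor
      · rintro ⟨⟨hi1', hiz'⟩, hisp⟩
        exact scan_index_unique (by omega) hisp hb hi1' hiz' hb1 hbz
      · rintro rfl
        exact ⟨⟨hb1, hbz⟩, hb⟩
    rw [bIdx, if_neg hjne, if_neg hk, hfilter, Finset.sup_singleton, id] at hib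
    obtain ⟨hbm, hbe⟩ := hb
    rw [scanPath_def, remnant_def] at hbm
    rw [remnant_def] at hbe
    have hstep := remnantIter_step_mem (j := j) hbm
    have hup := remnantIter_anti (lam := lam) (T := T) (j := j)
      (r := zeta lam j - b + 1) (r' := zeta lam j - i) (by omega) l
    omega

end ScanIndex

end KeyPoly

namespace KeyPoly

open KeyPolyAux

section EpathLemmas

variable {n : ℕ} {lam : NPartition n} {T : ℕ → ℕ → ℕ} {j : ℕ}

lemma Wspec (hj : 1 ≤ j) {l : ℕ} (hjl : j < l) (i : ℕ) :
    (((scanPath lam T j i).filter fun h => decide (h < l)).foldr max 0) ∈ scanPath lam T j i ∧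
    (((scanPath lam T j i).filter fun h => decide (h < l)).foldr max 0) < l ∧
    ∀ x ∈ scanPath lam T j i, x < l →
      x ≤ ((scanPath lam T j i).filter fun h => decide (h < l)).foldr max 0 := by
  have hjF : j ∈ (scanPath lam T j i).filter fun h => decide (h < l) := by
    rw [List.mem_filter]
    exact ⟨pathCols_mem_self T (remnant lam T j i) (lam.part 1) j, by simp [hjl]⟩
  have hge : j ≤ ((scanPath lam T j i).filter fun h => decide (h < l)).foldr max 0 :=
    le_foldr_max hjF
  have hmem : (((scanPath lam T j i).filter fun h => decide (h < l)).foldr max 0) ∈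
      (scanPath lam T j i).filter fun h => decide (h < l) := by
    rcases foldr_max_mem ((scanPath lam T j i).filter fun h => decide (h < l)) with h | h
    · exact h
    · omega
  rw [List.mem_filter, decide_eq_true_iff] at hmem
  exact ⟨hmem.1, hmem.2, fun x hx hxl =>
    le_foldr_max (List.mem_filter.mpr ⟨hx, by simpa using hxl⟩)⟩

lemma Epath_le (hT : IsSSYT lam T) (hj : 1 ≤ j) {l k i : ℕ} (hjl : j < l)
    (hmem : l ∈ scanPath lam T j i) (hstate : remnant lam T j i l = k) :
    Epath lam T l k j i ≤ T l k := by
  obtain ⟨hW1, hW2, hW3⟩ := Wspec (lam := lam) (T := T) hj hjl i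
  rw [Epath, if_neg (by omega : ¬ j = l)]
  have := pathCols_val_mono T (remnant lam T j i) (lam.part 1) hW1 hmem (le_of_lt hW2)
  rwa [hstate] at this

lemma Epath_gt (hT : IsSSYT lam T) (hj : 1 ≤ j) {l k i : ℕ} (hjl : j < l)
    (hshape : InShape lam l k) (hstate : remnant lam T j i l = k)
    (hnot : l ∉ scanPath lam T j i) : T l k < Epath lam T l k j i := by
  obtain ⟨hW1, hW2, hW3⟩ := Wspec (lam := lam) (T := T) hj hjl i
  rw [Epath, if_neg (by omega : ¬ j = l)]
  by_contra hcon
  push_neg at hcon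
  obtain ⟨y, hyP, hy1, hy2⟩ := pathCols_continue T (remnant lam T j i) (lam.part 1)
    hW1 hW2 (inShape_le_part_one lam hshape)
    (by rw [hstate]; exact hshape.2.1)
    (by rw [hstate]; exact hcon)
  rcases eq_or_lt_of_le hy2 with rfl | hylt
  · exact hnot hyP
  · have := hW3 y hyP hylt
    omega

lemma aIdx_spec (hT : IsSSYT lam T) (hj : 1 ≤ j) {l k : ℕ} (hjl : j < l)
    (hshape : InShape lam l k) :
    1 ≤ aIdx lam T l k j ∧ aIdx lam T l k j ≤ zeta lam j ∧
      InScanPath lam T j (aIdx lam T l k j) (l-1) k := by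
  have hjne : j ≠ l := by omega
  have hk1 : 1 ≤ k := hshape.2.1
  have hkz : k ≤ zeta lam l := (inShape_iff lam hshape.1 hk1).mp hshape
  have hkl1 : k ≤ zeta lam (l-1) := le_trans hkz (zeta_antitone lam (by omega))
  obtain ⟨a, ha1, haz, ha⟩ := scan_index_exists hT hj (by omega : j ≤ l - 1) hk1 hkl1
  have hfilter : (Finset.Icc 1 (zeta lam j)).filter
      (fun i => InScanPath lam T j i (l-1) k) = {a} := by
    apply Finset.ext
    intro i
    rw [Finset.mem_filter, Finset.mem_Icc, Finset.mem_singleton]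
    constructor
    · rintro ⟨⟨hi1, hiz⟩, hisp⟩
      exact scan_index_unique hk1 hisp ha hi1 hiz ha1 haz
    · rintro rfl
      exact ⟨⟨ha1, haz⟩, ha⟩
  rw [aIdx, if_neg hjne, hfilter, Finset.sup_singleton, id]
  exact ⟨ha1, haz, ha⟩

lemma bIdx_le (hT : IsSSYT lam T) (hj : 1 ≤ j) {l k : ℕ} (hjl : j < l)
    (hshape : InShape lam l k) : bIdx lam T l k j ≤ zeta lam j + 1 := by
  have hjne : j ≠ l := by omega
  by_cases hk : k = zeta lam l
  · rw [bIdx, if_neg hjne, if_pos hk]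
  · rw [bIdx, if_neg hjne, if_neg hk]
    have hk1 : 1 ≤ k := hshape.2.1
    have hkz : k ≤ zeta lam l := (inShape_iff lam hshape.1 hk1).mp hshape
    obtain ⟨b, hb1, hbz, hb⟩ := scan_index_exists hT hj (by omega : j ≤ l)
      (by omega : 1 ≤ k + 1) (by omega : k + 1 ≤ zeta lam l)
    have hfilter : (Finset.Icc 1 (zeta lam j)).filter
        (fun i => InScanPath lam T j i l (k+1)) = {b} := by
      apply Finset.ext
      intro i
      rw [Finset.mem_filter, Finset.mem_Icc, Finset.mem_singleton]
      constructor
      · rintro ⟨⟨hi1, hiz⟩, hisp⟩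
        exact scan_index_unique (by omega) hisp hb hi1 hiz hb1 hbz
      · rintro rfl
        exact ⟨⟨hb1, hbz⟩, hb⟩
    rw [hfilter, Finset.sup_singleton, id]
    omega

lemma scanValue_ge (hT : IsSSYT lam T) (hj : 1 ≤ j) {i : ℕ} (x : ℕ)
    (hx : x ∈ scanPath lam T j i) :
    T x (remnant lam T j i x) ≤ scanValue lam T j i := by
  have hne : scanPath lam T j i ≠ [] :=
    pathCols_ne_nil T (remnant lam T j i) (lam.part 1) j
  have hpw := pathColsAux_pairwise T (remnant lam T j i) (lam.part 1) (lam.part 1) j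
  have hpwv : (scanPath lam T j i).Pairwise
      (fun a b => T a (remnant lam T j i a) ≤ T b (remnant lam T j i b)) :=
    hpw.imp (fun h => h.2)
  rw [scanValue, getLastD_eq_getLast _ hne]
  rcases pairwise_getLast _ hne hpwv hx with h | h
  · rw [h]
  · exact h

end EpathLemmas

end KeyPoly

namespace KeyPoly

/-- Theorem 8.1.  `S(T) ≤ Y_λ(π)` iff every entry of `T`
lies in the corresponding southwestern set `B_λ(T, π; l, k)`. -/
theorem scan_le_key_iff_Bset (n : ℕ) (hn : 1 ≤ n) (lam : NPartition n)
    (p : ℕ → ℕ) (hp : IsNPerm n p) (T : ℕ → ℕ → ℕ) (hT : IsSSYT lam T) :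
    (∀ j i, InShape lam j i → scanValue lam T j i ≤ keyTab lam p j i) ↔
      (∀ l k, InShape lam l k → T l k ∈ Bset lam T p l k) := by
  open KeyPolyAux in
  constructor
  · -- forward: scan ≤ key ⟹ Bset membership
    intro hle l k hlk
    have hl1 : 1 ≤ l := hlk.1
    have hk1 : 1 ≤ k := hlk.2.1
    have hkz : k ≤ zeta lam l := (inShape_iff lam hl1 hk1).mp hlk
    rw [Bset, Set.mem_setOf_eq]
    intro j hj1 hjl
    rcases eq_or_lt_of_le hjl with rfl | hjlt
    · -- j = l
      refine ⟨k, ?_, ?_, ?_, ?_⟩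
      · rw [aIdx, if_pos rfl]
      · rw [bIdx, if_pos rfl]
      · rw [Epath, if_pos rfl]
        exact row_le_T hT hlk
      · have h2 := scanValue_ge hT hj1 (i := k) j
          (pathCols_mem_self T (remnant lam T j k) (lam.part 1) j)
        rw [remnant_self hT hkz] at h2
        exact le_trans h2 (hle j k hlk)
    · -- j < l
      obtain ⟨i₀, hi₀1, hi₀z, hi₀⟩ := scan_index_exists hT hj1 (le_of_lt hjlt) hk1 hkz
      obtain ⟨ha1, haz, ha⟩ := aIdx_spec hT hj1 hjlt hlk
      refine ⟨i₀, ?_, ?_, ?_, ?_⟩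
      · exact window_lower hT hj1 hjlt hk1 ha ha1 haz hi₀ hi₀1 hi₀z
      · exact window_upper hT hj1 hjlt hlk hi₀ hi₀1 hi₀z
      · exact Epath_le hT hj1 hjlt hi₀.1 hi₀.2.symm
      · have h2 := scanValue_ge hT hj1 (i := i₀) l hi₀.1
        rw [← hi₀.2] at h2
        exact le_trans h2 (hle j i₀ ((inShape_iff lam hj1 hi₀1).mpr hi₀z))
  · -- backward: Bset membership ⟹ scan ≤ key
    intro hB j i hji
    have hj1 : 1 ≤ j := hji.1
    have hi1 : 1 ≤ i := hji.2.1
    have hiz : i ≤ zeta lam j := (inShape_iff lam hj1 hi1).mp hji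
    have hne : scanPath lam T j i ≠ [] :=
      pathCols_ne_nil T (remnant lam T j i) (lam.part 1) j
    obtain ⟨L, hLdef⟩ : ∃ L, (scanPath lam T j i).getLastD j = L := ⟨_, rfl⟩
    obtain ⟨kk, hkkdef⟩ : ∃ kk, remnant lam T j i L = kk := ⟨_, rfl⟩
    have hLP : L ∈ scanPath lam T j i := by
      rw [← hLdef, getLastD_eq_getLast _ hne]
      exact List.getLast_mem hne
    have hjL_cases := pathCols_mem T (remnant lam T j i) (lam.part 1) j L hLP
    have hjL : j ≤ L := by rcases hjL_cases with h | ⟨h1, h2, h3⟩ <;> omega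
    have hkk1 : 1 ≤ kk := by
      rcases hjL_cases with h | ⟨h1, h2, h3⟩
      · rw [← hkkdef, h, remnant_self hT hiz]; omega
      · omega
    have hkkz : kk ≤ zeta lam L := by
      rw [← hkkdef]; exact remnant_le_zeta hT hj1 i L
    have hLshape : InShape lam L kk := (inShape_iff lam (by omega) hkk1).mpr hkkz
    have hIS : InScanPath lam T j i L kk := ⟨hLP, hkkdef.symm⟩
    have hsv : scanValue lam T j i = T L kk := by
      rw [scanValue, hLdef, hkkdef]
    have hBL := hB L kk hLshape
    rw [Bset, Set.mem_setOf_eq] at hBL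
    obtain ⟨i', h1, h2, h3, h4⟩ := hBL j hj1 hjL
    rcases eq_or_lt_of_le hjL with rfl | hjLlt
    · -- j = L
      rw [aIdx, if_pos rfl] at h1
      rw [bIdx, if_pos rfl] at h2
      have hkki : kk = i := by rw [← hkkdef, remnant_self hT hiz]
      have hii' : i' = i := by omega
      rw [hsv, ← hii']
      exact h4
    · -- j < L
      obtain ⟨ha1', haz', ha'⟩ := aIdx_spec hT hj1 hjLlt hLshape
      have hi'1 : 1 ≤ i' := le_trans ha1' h1
      have hble := bIdx_le hT hj1 hjLlt hLshape
      have hi'z : i' ≤ zeta lam j := by omega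
      have hi'le : i' ≤ i := by
        by_contra hcon
        push_neg at hcon
        have hstate : remnant lam T j i' L = kk :=
          window_state hT hj1 hjLlt hLshape hIS hi1 hiz (by omega) (by omega) hi'z
        have hnot : L ∉ scanPath lam T j i' := by
          intro hmem
          have : i' = i := scan_index_unique hkk1 ⟨hmem, hstate.symm⟩ hIS hi'1 hi'z hi1 hiz
          omega
        exact absurd h3 (not_le_of_gt (Epath_gt hT hj1 hjLlt hLshape hstate hnot))
      rw [hsv]
      exact le_trans h4 (keyTab_mono hp hj1 hi'1 hi'le hiz)


end KeyPoly
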